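/- If P is a non-finitely-generated strongly bounded atomic Puiseux monoid (i.e., P is generated by a set A of positive rationals with n(A) bounded), then ρ_k(P) is infinite for all sufficiently large k. -/

import Mathlib

/-- A Puiseux monoid: an additive submonoid of ℚ consisting of nonnegative rationals. -/
def PM.Puiseux (P : AddSubmonoid ℚ) : Prop := ∀ x ∈ P, 0 ≤ x

/-- `a` is an atom of `P`. -/
def PM.IsAtom (P : AddSubmonoid ℚ) (a : ℚ) : Prop :=
  a ∈ P ∧ a ≠ 0 ∧ ∀ x ∈ P, ∀ y ∈ P, a = x + y → x = 0 ∨ y = 0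

/-- A factorization of `x` is a multiset of atoms of `P` summing to `x`. -/
def PM.IsFactorization (P : AddSubmonoid ℚ) (x : ℚ) (z : Multiset ℚ) : Prop :=
  (∀ a ∈ z, PM.IsAtom P a) ∧ z.sum = x

/-- The set of lengths of `x`. -/
def PM.Lengths (P : AddSubmonoid ℚ) (x : ℚ) : Set ℕ :=
  {n | ∃ z : Multiset ℚ, PM.IsFactorization P x z ∧ Multiset.card z = n}

/-- `P` is atomic: it is generated by its set of atoms. -/
def PM.Atomic (P : AddSubmonoid ℚ) : Prop :=
  AddSubmonoid.closure {a | PM.IsAtom P a} = P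

/-- The union of sets of lengths `U_k(P)`. -/
def PM.U (P : AddSubmonoid ℚ) (k : ℕ) : Set ℕ :=
  {l | ∃ x ∈ P, k ∈ PM.Lengths P x ∧ l ∈ PM.Lengths P x}

private lemma den_mul_self (a : ℚ) : (a.den : ℚ) * a = a.num := by
  rw [mul_comm]; exact_mod_cast Rat.mul_den_eq_num a

theorem stmt4 (P : AddSubmonoid ℚ) (hP : PM.Puiseux P) (hA : PM.Atomic P)
    (hnfg : ¬ ∃ S : Finset ℚ, AddSubmonoid.closure (S : Set ℚ) = P)
    (hsb : ∃ A : Set ℚ, (∀ a ∈ A, 0 < a) ∧ AddSubmonoid.closure A = P ∧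
      ∃ B : ℤ, ∀ a ∈ A, a.num ≤ B) :
    ∃ d : ℕ, ∀ k ≥ d, (PM.U P k).Infinite := by
  classical
  obtain ⟨A, hApos, hAcl, B, hB⟩ := hsb
  set At : Set ℚ := {a | PM.IsAtom P a} with hAtdef
  -- Every atom belongs to A.
  have hatomA : At ⊆ A := by
    intro a ha
    obtain ⟨haP, hane, hsplit⟩ := ha
    have hmem : a ∈ AddSubmonoid.closure A := by rw [hAcl]; exact haP
    obtain ⟨l, hl, hsum⟩ := AddSubmonoid.exists_list_of_mem_closure hmem
    match l, hl, hsum with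
    | [], hl, hsum => exact absurd hsum.symm hane
    | y :: t, hl, hsum =>
      have hyA : y ∈ A := hl y List.mem_cons_self
      have hyP : y ∈ P := by
        rw [← hAcl]; exact AddSubmonoid.subset_closure hyA
      have htP : t.sum ∈ P := by
        rw [← hAcl]
        exact AddSubmonoid.list_sum_mem _ fun x hx =>
          AddSubmonoid.subset_closure (hl x (List.mem_cons_of_mem y hx))
      have := hsplit y hyP t.sum htP (by simpa using hsum.symm)
      rcases this with h0 | h0
      · exact absurd h0 (ne_of_gt (hApos y hyA))
      · have ht : t = [] := by
          by_contra htne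
          have : 0 < t.sum := List.sum_pos t
            (fun x hx => hApos x (hl x (List.mem_cons_of_mem y hx))) htne
          exact absurd h0 (ne_of_gt this)
        subst ht
        have : a = y := by simpa using hsum.symm
        rwa [this]
  -- The set of atoms is infinite.
  have hAtInf : At.Infinite := by
    by_contra hfin
    rw [Set.not_infinite] at hfin
    exact hnfg ⟨hfin.toFinset, by rw [Set.Finite.coe_toFinset]; exact hA⟩
  -- Atoms are positive, numerators bounded.
  have hAtpos : ∀ a ∈ At, 0 < a := fun a ha => hApos a (hatomA ha)
  have hnum1 : ∀ a ∈ At, 1 ≤ a.num := fun a ha => Rat.num_pos.mpr (hAtpos a ha)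
  have hnumB : ∀ a ∈ At, a.num ≤ B := fun a ha => hB a (hatomA ha)
  -- Pigeonhole: some numerator n₀ occurs infinitely often.
  have hpig : ∃ n₀ : ℤ, {a ∈ At | a.num = n₀}.Infinite := by
    by_contra h
    push_neg at h
    have hsub : At ⊆ ⋃ n ∈ Set.Icc (1 : ℤ) B, {a ∈ At | a.num = n} := by
      intro a ha
      exact Set.mem_biUnion ⟨hnum1 a ha, hnumB a ha⟩ ⟨ha, rfl⟩
    exact hAtInf (((Set.finite_Icc (1 : ℤ) B).biUnion fun n _ => h n).subset hsub)
  obtain ⟨n₀, hS⟩ := hpig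
  set S : Set ℚ := {a ∈ At | a.num = n₀} with hSdef
  obtain ⟨a₀, ha₀⟩ := hS.nonempty
  have ha₀At : a₀ ∈ At := ha₀.1
  have hn₀1 : 1 ≤ n₀ := ha₀.2 ▸ hnum1 a₀ ha₀At
  set n : ℕ := n₀.toNat with hndef
  have hncast : (n : ℤ) = n₀ := Int.toNat_of_nonneg (by omega)
  have hnpos : 0 < n := by omega
  -- key computation : for a ∈ S, (n * a.den) • a = n * n₀ as rationals
  have hkey : ∀ a ∈ S, ((n * a.den : ℕ) : ℚ) * a = (n : ℚ) * (n₀ : ℚ) := by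
    intro a ha
    push_cast
    rw [mul_assoc, den_mul_self, ha.2]
  refine ⟨n * a₀.den, fun k hk => ?_⟩
  set x : ℚ := (k : ℚ) * a₀ with hxdef
  have hxP : x ∈ P := by
    have := AddSubmonoid.nsmul_mem P ha₀At.1 k
    rwa [nsmul_eq_mul] at this
  -- auxiliary: replicate factorizations
  have hfact : ∀ a ∈ S, ∀ m : ℕ, (∀ b ∈ Multiset.replicate m a, PM.IsAtom P b) := by
    intro a ha m b hb
    rw [Multiset.eq_of_mem_replicate hb]; exact ha.1
  -- k ∈ Lengths P x
  have hkL : k ∈ PM.Lengths P x := by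
    refine ⟨Multiset.replicate k a₀, ⟨hfact a₀ ha₀ k, ?_⟩, Multiset.card_replicate _ _⟩
    rw [Multiset.sum_replicate, nsmul_eq_mul]
  -- the long factorizations
  have hmain : ∀ a ∈ S, (k - n * a₀.den) + n * a.den ∈ PM.U P k := by
    intro a ha
    refine ⟨x, hxP, hkL, Multiset.replicate (k - n * a₀.den) a₀ +
      Multiset.replicate (n * a.den) a, ⟨?_, ?_⟩, ?_⟩
    · intro b hb
      rcases Multiset.mem_add.mp hb with hb | hb
      · exact hfact a₀ ha₀ _ b hb
      · exact hfact a ha _ b hb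
    · rw [Multiset.sum_add, Multiset.sum_replicate, Multiset.sum_replicate,
        nsmul_eq_mul, nsmul_eq_mul, hkey a ha, ← hkey a₀ ha₀]
      rw [Nat.cast_sub hk]
      ring
    · simp [Multiset.card_replicate]
  -- the lengths are pairwise distinct
  have hinj : Set.InjOn (fun a : ℚ => (k - n * a₀.den) + n * a.den) S := by
    intro a ha b hb hab
    simp only at hab
    have hden : a.den = b.den := by
      have := Nat.add_left_cancel hab
      exact Nat.eq_of_mul_eq_mul_left hnpos this
    exact Rat.ext (ha.2.trans hb.2.symm) hden
  have : ((fun a : ℚ => (k - n * a₀.den) + n * a.den) '' S).Infinite :=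
    hS.image hinj
  exact this.mono (by rintro l ⟨a, ha, rfl⟩; exact hmain a ha)
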